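/- Let N ≥ 1 be an integer, let η⁰, η¹, …, η^N : [0,∞) → ℝ be C² functions, and let u^i_k : [0,∞) → ℝ (for i,k ∈ {0,…,N}) be continuous functions such that (η⁰)''(r) + 2(η⁰)'(r) = Σ_{k=0}^{N} u⁰_k(r) η^k(r) and, for each j ∈ {1,…,N}, (η^j)''(r) + (η^j)'(r) = Σ_{k=0}^{N} u^j_k(r) η^k(r), for all r ≥ 0. Set u(r) = max_{i,k ∈ {0,…,N}} |u^i_k(r)|. Then for all r ≥ 0: Σ_{i=0}^{N} |η^i(r)| ≤ (Σ_{i=0}^{N} (|η^i(0)| + |(η^i)'(0)|)) · exp((N+1) ∫₀^r u(s) ds). -/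

import Mathlib

open Real


lemma hasDerivAt_primitive' {f : ℝ → ℝ} (hf : Continuous f) (r : ℝ) :
    HasDerivAt (fun t => ∫ s in (0:ℝ)..t, f s) (f r) r :=
  intervalIntegral.integral_hasDerivAt_right (hf.intervalIntegrable _ _)
    (hf.stronglyMeasurableAtFilter _ _) hf.continuousAt

lemma gronwall_int {φ K : ℝ → ℝ} (hφ : Continuous φ) (hK : Continuous K)
    (hK0 : ∀ s, 0 ≤ K s)
    (h : ∀ r ≥ (0:ℝ), φ r ≤ φ 0 + ∫ s in (0:ℝ)..r, K s * φ s) :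
    ∀ r ≥ (0:ℝ), φ r ≤ φ 0 * Real.exp (∫ s in (0:ℝ)..r, K s) := by
  set Ψ : ℝ → ℝ := fun r => φ 0 + ∫ s in (0:ℝ)..r, K s * φ s with hΨdef
  set I : ℝ → ℝ := fun r => ∫ s in (0:ℝ)..r, K s with hIdef
  have hKφ : Continuous fun s => K s * φ s := hK.mul hφ
  have hΨ : ∀ r, HasDerivAt Ψ (K r * φ r) r := fun r =>
    (hasDerivAt_primitive' hKφ r).const_add _
  have hI : ∀ r, HasDerivAt I (K r) r := fun r => hasDerivAt_primitive' hK r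
  set E : ℝ → ℝ := fun r => Ψ r * Real.exp (-(I r)) with hEdef
  have hE : ∀ r, HasDerivAt E ((K r * φ r - K r * Ψ r) * Real.exp (-(I r))) r := by
    intro r
    have h1 : HasDerivAt (fun t => Real.exp (-(I t))) (Real.exp (-(I r)) * (-(K r))) r :=
      (hI r).neg.exp
    have h2 := (hΨ r).mul h1
    exact h2.congr_deriv (by ring)
  have hEdiff : Differentiable ℝ E := fun r => (hE r).differentiableAt
  have hmono : AntitoneOn E (Set.Ici (0:ℝ)) := by
    apply antitoneOn_of_deriv_nonpos (convex_Ici 0) hEdiff.continuous.continuousOn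
      hEdiff.differentiableOn
    intro x hx
    rw [interior_Ici] at hx
    rw [(hE x).deriv]
    apply mul_nonpos_of_nonpos_of_nonneg _ (Real.exp_nonneg _)
    have hφΨ : φ x ≤ Ψ x := h x (le_of_lt hx)
    have := hK0 x
    nlinarith
  intro r hr
  have hle : E r ≤ E 0 := hmono (Set.self_mem_Ici) hr hr
  have hE0 : E 0 = φ 0 := by simp [hEdef, hΨdef, hIdef]
  have hΨr : Ψ r ≤ φ 0 * Real.exp (I r) := by
    have h1 : Ψ r * Real.exp (-(I r)) ≤ φ 0 := hE0 ▸ hle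
    have h2 : Real.exp (-(I r)) * Real.exp (I r) = 1 := by
      rw [← Real.exp_add]; simp
    calc Ψ r = Ψ r * Real.exp (-(I r)) * Real.exp (I r) := by
          rw [mul_assoc, h2, mul_one]
      _ ≤ φ 0 * Real.exp (I r) := by
          apply mul_le_mul_of_nonneg_right h1 (Real.exp_nonneg _)
  exact (h r hr).trans hΨr

lemma aux_damped {ζ f : ℝ → ℝ} {c : ℝ} (hc : 1 ≤ c) (hζ : Differentiable ℝ ζ)
    (hf : Continuous f) (hode : ∀ r ≥ (0:ℝ), deriv ζ r = f r - c * ζ r) :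
    ∀ r ≥ (0:ℝ), |ζ r| ≤ Real.exp (-r) * (|ζ 0| + ∫ s in (0:ℝ)..r, Real.exp s * |f s|) := by
  intro r hr
  have key : Real.exp (c * r) * ζ r = ζ 0 + ∫ s in (0:ℝ)..r, Real.exp (c * s) * f s := by
    have hint := intervalIntegral.integral_eq_sub_of_hasDerivAt
      (f := fun s => Real.exp (c * s) * ζ s)
      (f' := fun s => Real.exp (c * s) * f s) (a := 0) (b := r) ?_ ?_
    · rw [hint]; simp
    · intro s hs
      rw [Set.uIcc_of_le hr] at hs
      have hd : HasDerivAt (fun s => Real.exp (c * s) * ζ s)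
          (Real.exp (c * s) * c * ζ s + Real.exp (c * s) * deriv ζ s) s := by
        have h1 : HasDerivAt (fun s => Real.exp (c * s)) (Real.exp (c * s) * c) s := by
          simpa using ((hasDerivAt_id s).const_mul c).exp
        exact h1.mul (hζ s).hasDerivAt
      exact hd.congr_deriv (by rw [hode s hs.1]; ring)
    · exact ((Real.continuous_exp.comp (continuous_const.mul  continuous_id)).mul hf).intervalIntegrable _ _
  have hcr : (0:ℝ) ≤ c * r := mul_nonneg (by linarith) hr
  have step1 : Real.exp (c * r) * |ζ r| ≤ |ζ 0| + ∫ s in (0:ℝ)..r, Real.exp (c * s) * |f s| := by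
    have h1 : Real.exp (c * r) * |ζ r| = |Real.exp (c * r) * ζ r| := by
      rw [abs_mul, abs_of_pos (Real.exp_pos _)]
    rw [h1, key]
    refine (abs_add_le _ _).trans (add_le_add_right ?_ _)
    refine (intervalIntegral.abs_integral_le_integral_abs hr).trans_eq ?_
    congr 1
    ext s
    rw [abs_mul, abs_of_pos (Real.exp_pos _)]
  have step2 : |ζ r| ≤ Real.exp (-(c * r)) * (|ζ 0| + ∫ s in (0:ℝ)..r, Real.exp (c * s) * |f s|) := by
    have h2 : Real.exp (-(c * r)) * Real.exp (c * r) = 1 := by rw [← Real.exp_add]; simp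
    calc |ζ r| = Real.exp (-(c * r)) * (Real.exp (c * r) * |ζ r|) := by
          rw [← mul_assoc, h2, one_mul]
      _ ≤ _ := mul_le_mul_of_nonneg_left step1 (Real.exp_nonneg _)
  refine step2.trans ?_
  rw [mul_add, mul_add]
  refine add_le_add ?_ ?_
  · exact mul_le_mul_of_nonneg_right (Real.exp_le_exp.2 (by nlinarith)) (abs_nonneg _)
  · rw [← intervalIntegral.integral_const_mul, ← intervalIntegral.integral_const_mul]
    apply intervalIntegral.integral_mono_on hr
    · exact (continuous_const.mul ((Real.continuous_exp.comp (continuous_const.mul continuous_id)).mul hf.abs)).intervalIntegrable _ _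
    · exact (continuous_const.mul (Real.continuous_exp.mul hf.abs)).intervalIntegrable _ _
    · intro s hs
      rw [← mul_assoc, ← mul_assoc, ← Real.exp_add, ← Real.exp_add]
      apply mul_le_mul_of_nonneg_right _ (abs_nonneg _)
      apply Real.exp_le_exp.2
      nlinarith [hs.1, hs.2]

/-- Lemma 3.6 of the paper (Grönwall estimate for the Jacobi system): the solutions of the
second order linear system `(η⁰)'' + 2(η⁰)' = Σ u⁰_k η^k`, `(η^j)'' + (η^j)' = Σ u^j_k η^k`
satisfy `Σ |η^i(r)| ≤ (Σ (|η^i(0)| + |(η^i)'(0)|)) exp((N+1) ∫₀^r u)` where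
`u(r) = max_{i,k} |u^i_k(r)|`. -/
theorem stmt3 (N : ℕ) (hN : 1 ≤ N)
    (η : Fin (N + 1) → ℝ → ℝ) (hη : ∀ i, ContDiff ℝ 2 (η i))
    (u : Fin (N + 1) → Fin (N + 1) → ℝ → ℝ) (hu : ∀ i k, Continuous (u i k))
    (hode0 : ∀ r ≥ (0:ℝ),
      deriv (deriv (η 0)) r + 2 * deriv (η 0) r = ∑ k, u 0 k r * η k r)
    (hodej : ∀ j : Fin (N + 1), j ≠ 0 → ∀ r ≥ (0:ℝ),
      deriv (deriv (η j)) r + deriv (η j) r = ∑ k, u j k r * η k r) :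
    ∀ r ≥ (0:ℝ), ∑ i, |η i r| ≤ (∑ i, (|η i 0| + |deriv (η i) 0|)) *
      Real.exp (((N : ℝ) + 1) * ∫ s in (0:ℝ)..r, ⨆ i, ⨆ k, |u i k s|) := by
  -- basic regularity
  have hηc : ∀ i, Continuous (η i) := fun i => (hη i).continuous
  have hηd : ∀ i, Differentiable ℝ (η i) := fun i => (hη i).differentiable two_ne_zero
  have hζc : ∀ i, Continuous (deriv (η i)) := fun i => (hη i).continuous_deriv one_le_two
  have hζd : ∀ i, Differentiable ℝ (deriv (η i)) := by
    intro i
    have h2 : ContDiff ℝ ((1:WithTop ℕ∞) + 1) (η i) := by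
      have : ((1:WithTop ℕ∞) + 1) = 2 := by norm_num
      rw [this]; exact hη i
    exact (contDiff_succ_iff_deriv.mp h2).2.2.differentiable one_ne_zero
  have hfc : ∀ i, Continuous (fun s => ∑ k, u i k s * η k s) := fun i =>
    continuous_finset_sum _ fun k _ => (hu i k).mul (hηc k)
  -- the sup function
  set M : ℝ → ℝ := fun s => ⨆ i, ⨆ k, |u i k s| with hMdef
  have hMeq : ∀ s, M s = Finset.univ.sup' Finset.univ_nonempty
      (fun i => Finset.univ.sup' Finset.univ_nonempty (fun k => |u i k s|)) := by
    intro s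
    simp only [Finset.sup'_univ_eq_ciSup]
    rfl
  have hMc : Continuous M := by
    have : Continuous fun s => Finset.univ.sup' Finset.univ_nonempty
        (fun i : Fin (N+1) => Finset.univ.sup' Finset.univ_nonempty
          (fun k : Fin (N+1) => |u i k s|)) := by
      apply Continuous.finset_sup'_apply Finset.univ_nonempty
      intro i _
      apply Continuous.finset_sup'_apply Finset.univ_nonempty
      intro k _
      exact (hu i k).abs
    exact this.congr fun s => (hMeq s).symm
  have hbound : ∀ i k s, |u i k s| ≤ M s := by
    intro i k s
    refine le_trans (le_ciSup (f := fun k => |u i k s|) (Set.finite_range _).bddAbove k) ?_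
    exact le_ciSup (f := fun i => ⨆ k, |u i k s|) (Set.finite_range _).bddAbove i
  have hM0 : ∀ s, 0 ≤ M s := fun s => (abs_nonneg _).trans (hbound 0 0 s)
  set K : ℝ → ℝ := fun s => ((N:ℝ) + 1) * M s with hKdef
  have hKc : Continuous K := continuous_const.mul hMc
  have hK0 : ∀ s, 0 ≤ K s := fun s => mul_nonneg (by positivity) (hM0 s)
  -- quantities
  set A : ℝ → ℝ := fun s => ∑ i, |η i s| with hAdef
  set F : ℝ → ℝ := fun s => ∑ i, |∑ k, u i k s * η k s| with hFdef
  set B0 : ℝ := ∑ i, |deriv (η i) 0| with hB0def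
  have hAc : Continuous A := continuous_finset_sum _ fun i _ => (hηc i).abs
  have hFc : Continuous F := continuous_finset_sum _ fun i _ => (hfc i).abs
  have hF0 : ∀ s, 0 ≤ F s := fun s => Finset.sum_nonneg fun i _ => abs_nonneg _
  have hB0nn : 0 ≤ B0 := Finset.sum_nonneg fun i _ => abs_nonneg _
  set C : ℝ → ℝ := fun s => Real.exp (-s) * (B0 + ∫ t in (0:ℝ)..s, Real.exp t * F t) with hCdef
  have hexpF : Continuous fun t => Real.exp t * F t := Real.continuous_exp.mul hFc
  have hCd : ∀ s, HasDerivAt C (F s - C s) s := by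
    intro s
    have h1 : HasDerivAt (fun t => B0 + ∫ x in (0:ℝ)..t, Real.exp x * F x)
        (Real.exp s * F s) s := (hasDerivAt_primitive' hexpF s).const_add B0
    have h2 : HasDerivAt (fun t : ℝ => Real.exp (-t)) (-Real.exp (-s)) s := by
      simpa using ((hasDerivAt_id s).neg).exp
    have h3 := h2.mul h1
    refine h3.congr_deriv (Eq.symm ?_)
    have hone : Real.exp (-s) * Real.exp s = 1 := by rw [← Real.exp_add]; simp
    simp only [hCdef]
    linear_combination (-F s) * hone
  have hCc : Continuous C := by
    have : Differentiable ℝ C := fun s => (hCd s).differentiableAt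
    exact this.continuous
  have hC0 : C 0 = B0 := by simp [hCdef]
  have hCint : ∀ r, C r + ∫ s in (0:ℝ)..r, C s = B0 + ∫ s in (0:ℝ)..r, F s := by
    intro r
    have hft := intervalIntegral.integral_eq_sub_of_hasDerivAt (f := C)
      (f' := fun s => F s - C s) (a := 0) (b := r) (fun s _ => hCd s)
      ((hFc.sub hCc).intervalIntegrable _ _)
    rw [intervalIntegral.integral_sub (hFc.intervalIntegrable _ _)
      (hCc.intervalIntegrable _ _)] at hft
    rw [hC0] at hft
    linarith
  have hCnn : ∀ s ≥ (0:ℝ), 0 ≤ C s := by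
    intro s hs
    apply mul_nonneg (Real.exp_nonneg _)
    have h1 : 0 ≤ ∫ t in (0:ℝ)..s, Real.exp t * F t :=
      intervalIntegral.integral_nonneg hs fun t _ => mul_nonneg (Real.exp_nonneg _) (hF0 t)
    linarith
  -- F ≤ K * A
  have hFA : ∀ s, F s ≤ K s * A s := by
    intro s
    have h1 : ∀ i : Fin (N+1), |∑ k, u i k s * η k s| ≤ M s * A s := by
      intro i
      calc |∑ k, u i k s * η k s| ≤ ∑ k, |u i k s * η k s| := Finset.abs_sum_le_sum_abs _ _
        _ ≤ ∑ k, M s * |η k s| := Finset.sum_le_sum fun k _ => by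
              rw [abs_mul]
              exact mul_le_mul_of_nonneg_right (hbound i k s) (abs_nonneg _)
        _ = M s * A s := by rw [hAdef, Finset.mul_sum]
    calc F s ≤ ∑ _i : Fin (N+1), M s * A s := Finset.sum_le_sum fun i _ => h1 i
      _ = ((N:ℝ) + 1) * (M s * A s) := by
          rw [Finset.sum_const, Finset.card_univ, Fintype.card_fin, nsmul_eq_mul]
          push_cast
          ring
      _ = K s * A s := by rw [hKdef]; ring
  -- derivative bound: sum over i of |deriv η i| ≤ C
  have hBC : ∀ r ≥ (0:ℝ), (∑ i, |deriv (η i) r|) ≤ C r := by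
    intro r hr
    have hi : ∀ i : Fin (N+1), |deriv (η i) r| ≤ Real.exp (-r) * (|deriv (η i) 0| +
        ∫ s in (0:ℝ)..r, Real.exp s * |∑ k, u i k s * η k s|) := by
      intro i
      refine aux_damped (c := if i = (0 : Fin (N+1)) then (2:ℝ) else 1) ?_ (hζd i) (hfc i) ?_ r hr
      · split <;> norm_num
      · intro s hs
        by_cases h0 : i = 0
        · subst h0; simp only [if_pos]; linarith [hode0 s hs]
        · rw [if_neg h0]; linarith [hodej i h0 s hs]
    have hsum : ∑ i : Fin (N+1), ∫ s in (0:ℝ)..r, Real.exp s * |∑ k, u i k s * η k s| =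
        ∫ s in (0:ℝ)..r, Real.exp s * F s := by
      rw [← intervalIntegral.integral_finset_sum (f := fun i s => Real.exp s * |∑ k, u i k s * η k s|)
        (fun i _ => (Real.continuous_exp.mul (hfc i).abs).intervalIntegrable (μ := MeasureTheory.volume) 0 r)]
      simp only [hFdef, Finset.mul_sum]
    calc ∑ i, |deriv (η i) r| ≤ ∑ i : Fin (N+1), Real.exp (-r) * (|deriv (η i) 0| +
          ∫ s in (0:ℝ)..r, Real.exp s * |∑ k, u i k s * η k s|) :=
        Finset.sum_le_sum fun i _ => hi i
      _ = C r := by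
          rw [← Finset.mul_sum, Finset.sum_add_distrib, hsum, hCdef]
  -- A bound
  have hAB : ∀ r ≥ (0:ℝ), A r ≤ A 0 + ∫ s in (0:ℝ)..r, ∑ i, |deriv (η i) s| := by
    intro r hr
    have hi : ∀ i : Fin (N+1), |η i r| ≤ |η i 0| + ∫ s in (0:ℝ)..r, |deriv (η i) s| := by
      intro i
      have hft : ∫ s in (0:ℝ)..r, deriv (η i) s = η i r - η i 0 :=
        intervalIntegral.integral_eq_sub_of_hasDerivAt (fun s _ => (hηd i s).hasDerivAt)
          ((hζc i).intervalIntegrable _ _)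
      calc |η i r| = |η i 0 + (η i r - η i 0)| := by ring_nf
        _ ≤ |η i 0| + |η i r - η i 0| := abs_add_le _ _
        _ ≤ |η i 0| + ∫ s in (0:ℝ)..r, |deriv (η i) s| := by
            rw [← hft]
            exact add_le_add_right (intervalIntegral.abs_integral_le_integral_abs hr) _
    calc A r ≤ ∑ i : Fin (N+1), (|η i 0| + ∫ s in (0:ℝ)..r, |deriv (η i) s|) :=
        Finset.sum_le_sum fun i _ => hi i
      _ = A 0 + ∫ s in (0:ℝ)..r, ∑ i, |deriv (η i) s| := by
          rw [Finset.sum_add_distrib, intervalIntegral.integral_finset_sum]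
          intro i _
          exact (hζc i).abs.intervalIntegrable _ _
  -- the integral inequality for φ = A + C
  have hBcont : Continuous fun s => ∑ i, |deriv (η i) s| :=
    continuous_finset_sum _ fun i _ => (hζc i).abs
  have hφint : ∀ r ≥ (0:ℝ), A r + C r ≤ (A 0 + B0) + ∫ s in (0:ℝ)..r, K s * (A s + C s) := by
    intro r hr
    have h1 : A r ≤ A 0 + ∫ s in (0:ℝ)..r, C s := by
      refine (hAB r hr).trans (add_le_add_right ?_ _)
      exact intervalIntegral.integral_mono_on hr (hBcont.intervalIntegrable _ _)
        (hCc.intervalIntegrable _ _) fun s hs => hBC s hs.1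
    have h3 : ∫ s in (0:ℝ)..r, F s ≤ ∫ s in (0:ℝ)..r, K s * (A s + C s) := by
      apply intervalIntegral.integral_mono_on hr (hFc.intervalIntegrable _ _)
        ((hKc.mul (hAc.add hCc)).intervalIntegrable _ _)
      intro s hs
      show F s ≤ K s * (A s + C s)
      refine (hFA s).trans ?_
      have := hCnn s hs.1
      have := hK0 s
      nlinarith
    have := hCint r
    linarith
  -- Grönwall
  have hgron := gronwall_int (φ := fun s => A s + C s) (hAc.add hCc) hKc hK0 ?_
  · intro r hr
    have h1 := hgron r hr
    beta_reduce at h1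
    have h2 : A r ≤ A r + C r := le_add_of_nonneg_right (hCnn r hr)
    have h4 : ∑ i, (|η i 0| + |deriv (η i) 0|) = A 0 + B0 := by
      rw [hAdef, hB0def, Finset.sum_add_distrib]
    have h5 : ∫ s in (0:ℝ)..r, K s = ((N:ℝ) + 1) * ∫ s in (0:ℝ)..r, M s := by
      simp only [hKdef]
      exact intervalIntegral.integral_const_mul _ _
    have h6 : A 0 + C 0 = A 0 + B0 := by rw [hC0]
    rw [h6, h5] at h1
    show A r ≤ (∑ i, (|η i 0| + |deriv (η i) 0|)) *
      Real.exp (((N : ℝ) + 1) * ∫ s in (0:ℝ)..r, M s)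
    rw [h4]
    linarith
  · intro r hr
    beta_reduce
    have h6 : A 0 + C 0 = A 0 + B0 := by rw [hC0]
    linarith [hφint r hr]
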